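/- Assume (C, E, s) is an n-exangulated category in which, for every object X, the morphism X → 0 is a trivial inflation and the morphism 0 → X is a trivial deflation; for each object X fix a distinguished n-exangle X → 0 → ⋯ → 0 → ΣX ⇢(δ_X), let E¹ := C(−, Σ−), and let 𝔯 be the exact realization of E¹ given by 𝔯(ε) := s(ε* δ_{X₀}). Then the triple (C, E¹, 𝔯) is an n-exangulated category, i.e. it satisfies (EA1), (EA2) and (EA2^op). -/

import Mathlib

/-!
Common definitions: complexes of length `n+2`, `n`-exangulated categories
(Herschend–Liu–Nakaoka), and `(n+2)`-angulated categories
(Geiss–Keller–Oppermann), formalized from scratch.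
-/

open CategoryTheory CategoryTheory.Limits Opposite ZeroObject

universe v u

namespace Paper
set_option linter.unusedSectionVars false

/-- A complex concentrated in degrees `0, …, n+1`.  Only the objects in degrees
`0, …, n+1` and the differentials `d 0, …, d n` carry information; all objects in
higher degrees are required to be zero. -/
structure ExCpx (n : ℕ) (C : Type u) [Category.{v} C] [Preadditive C] [HasZeroObject C] where
  obj : ℕ → C
  d : ∀ i, obj i ⟶ obj (i + 1)
  dd : ∀ i, i + 1 ≤ n → d i ≫ d (i + 1) = 0
  isZero_of_gt : ∀ i, n + 1 < i → IsZero (obj i)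

variable {C : Type u} [Category.{v} C] [Preadditive C] [HasZeroObject C] [HasFiniteBiproducts C] [HasBinaryBiproducts C]

/-- Morphisms of complexes of length `n+2`. -/
structure CpxHom {n : ℕ} (X Y : ExCpx n C) where
  f : ∀ i, X.obj i ⟶ Y.obj i
  comm : ∀ i, i ≤ n → X.d i ≫ f (i + 1) = f i ≫ Y.d i

/-- The identity morphism of a complex. -/
def CpxHom.id {n : ℕ} (X : ExCpx n C) : CpxHom X X :=
  ⟨fun _ => 𝟙 _, fun i _ => by simp⟩

/-- Composition of morphisms of complexes. -/
def CpxHom.comp {n : ℕ} {X Y Z : ExCpx n C} (φ : CpxHom X Y) (ψ : CpxHom Y Z) : CpxHom X Z :=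
  ⟨fun i => φ.f i ≫ ψ.f i, fun i hi => by
    rw [← Category.assoc, φ.comm i hi, Category.assoc, ψ.comm i hi, ← Category.assoc]⟩

/-- Chain homotopy between two morphisms of complexes of length `n+2`,
for complexes concentrated in degrees `0, …, n+1`. -/
def Homotopic (n : ℕ) {X Y : ExCpx n C} (φ ψ : CpxHom X Y) : Prop :=
  ∃ h : ∀ i, X.obj (i + 1) ⟶ Y.obj i,
    (φ.f 0 - ψ.f 0 = X.d 0 ≫ h 0) ∧
    (∀ i, i + 1 ≤ n → φ.f (i + 1) - ψ.f (i + 1) = X.d (i + 1) ≫ h (i + 1) + h i ≫ Y.d i) ∧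
    (φ.f (n + 1) - ψ.f (n + 1) = h n ≫ Y.d n)

/-- Homotopy equivalence of complexes which is the identity on the two end terms. -/
def FixedEndsHtpyEquiv (n : ℕ) (X Y : ExCpx n C) (h0 : X.obj 0 = Y.obj 0)
    (h1 : X.obj (n + 1) = Y.obj (n + 1)) : Prop :=
  ∃ (u : CpxHom X Y) (v : CpxHom Y X),
    u.f 0 = eqToHom h0 ∧ u.f (n + 1) = eqToHom h1 ∧
    v.f 0 = eqToHom h0.symm ∧ v.f (n + 1) = eqToHom h1.symm ∧
    Homotopic n (u.comp v) (CpxHom.id X) ∧ Homotopic n (v.comp u) (CpxHom.id Y)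

/-- `EE E B A` is the abelian group `E(B, A)` of `E`-extensions. -/
abbrev EE (E : Cᵒᵖ ⥤ C ⥤ AddCommGrpCat.{v}) (B A : C) : Type v := (E.obj (op B)).obj A

/-- Covariant action `f_* δ` of `E` on extensions. -/
def push {E : Cᵒᵖ ⥤ C ⥤ AddCommGrpCat.{v}} {B A A' : C} (f : A ⟶ A') (δ : EE E B A) :
    EE E B A' := ((E.obj (op B)).map f) δ

/-- Contravariant action `g^* δ` of `E` on extensions. -/
def pull {E : Cᵒᵖ ⥤ C ⥤ AddCommGrpCat.{v}} {B B' A : C} (g : B' ⟶ B) (δ : EE E B A) :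
    EE E B' A := ((E.map g.op).app A) δ

/-- Transport of extensions along equalities of objects. -/
def castE {E : Cᵒᵖ ⥤ C ⥤ AddCommGrpCat.{v}} {B B' A A' : C} (hB : B = B') (hA : A = A')
    (δ : EE E B A) : EE E B' A' := by subst hB; subst hA; exact δ

/-- The type of a "distinguished `n`-exangle" predicate. -/
def DistType (n : ℕ) (C : Type u) [Category.{v} C] [Preadditive C] [HasZeroObject C]
    (E : Cᵒᵖ ⥤ C ⥤ AddCommGrpCat.{v}) : Type (max u v) :=
  ∀ X : ExCpx n C, EE E (X.obj (n + 1)) (X.obj 0) → Prop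

/-- `f` is an inflation: it appears as the `0`-th differential of some
distinguished `n`-exangle. -/
def InflationOf {n : ℕ} {E : Cᵒᵖ ⥤ C ⥤ AddCommGrpCat.{v}} (D : DistType n C E)
    {A B : C} (f : A ⟶ B) : Prop :=
  ∃ (X : ExCpx n C) (δ : EE E (X.obj (n + 1)) (X.obj 0)) (h0 : X.obj 0 = A) (h1 : X.obj 1 = B),
    D X δ ∧ X.d 0 = eqToHom h0 ≫ f ≫ eqToHom h1.symm

/-- `f` is a deflation: it appears as the `n`-th differential of some
distinguished `n`-exangle. -/
def DeflationOf {n : ℕ} {E : Cᵒᵖ ⥤ C ⥤ AddCommGrpCat.{v}} (D : DistType n C E)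
    {A B : C} (f : A ⟶ B) : Prop :=
  ∃ (X : ExCpx n C) (δ : EE E (X.obj (n + 1)) (X.obj 0)) (h0 : X.obj n = A)
    (h1 : X.obj (n + 1) = B),
    D X δ ∧ X.d n = eqToHom h0 ≫ f ≫ eqToHom h1.symm

/-- The mapping cone of a morphism of complexes whose `0`-th component is
(an identity up to equality of objects):
`X₁ → X₂ ⊕ Y₁ → ⋯ → X_{n+1} ⊕ Yₙ → Y_{n+1}` with the usual matrix differentials. -/
def IsMappingCone (n : ℕ) {X Y : ExCpx n C} (φ : CpxHom X Y) (M : ExCpx n C) : Prop :=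
  ∃ (e0 : M.obj 0 = X.obj 1) (etop : M.obj (n + 1) = Y.obj (n + 1))
    (emid : ∀ i, 1 ≤ i → i ≤ n → M.obj i = ((X.obj (i + 1)) ⊞ (Y.obj i))),
    (∀ hn : 1 ≤ n,
      M.d 0 = eqToHom e0 ≫ biprod.lift (-(X.d 1)) (φ.f 1) ≫ eqToHom (emid 1 le_rfl hn).symm) ∧
    (∀ i (h1 : 1 ≤ i) (h2 : i + 1 ≤ n),
      M.d i = eqToHom (emid i (by omega) (by omega)) ≫
        biprod.desc (biprod.lift (-(X.d (i + 1))) (φ.f (i + 1))) (biprod.lift 0 (Y.d i)) ≫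
        eqToHom (emid (i + 1) (by omega) (by omega)).symm) ∧
    (∀ hn : 1 ≤ n,
      M.d n = eqToHom (emid n hn le_rfl) ≫ biprod.desc (φ.f (n + 1)) (Y.d n) ≫ eqToHom etop.symm)

/-- The mapping cocone of a morphism of complexes whose `(n+1)`-st component is
(an identity up to equality of objects):
`X₀ → Y₀ ⊕ X₁ → ⋯ → Y_{n-1} ⊕ Xₙ → Yₙ`. -/
def IsMappingCocone (n : ℕ) {X Y : ExCpx n C} (φ : CpxHom X Y) (M : ExCpx n C) : Prop :=
  ∃ (e0 : M.obj 0 = X.obj 0) (etop : M.obj (n + 1) = Y.obj n)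
    (emid : ∀ i, i + 1 ≤ n → M.obj (i + 1) = ((Y.obj i) ⊞ (X.obj (i + 1)))),
    (∀ hn : 1 ≤ n,
      M.d 0 = eqToHom e0 ≫ biprod.lift (φ.f 0) (X.d 0) ≫ eqToHom (emid 0 hn).symm) ∧
    (∀ i (h2 : i + 2 ≤ n),
      M.d (i + 1) = eqToHom (emid i (by omega)) ≫
        biprod.desc (biprod.lift (-(Y.d i)) 0) (biprod.lift (φ.f (i + 1)) (X.d (i + 1))) ≫
        eqToHom (emid (i + 1) (by omega)).symm) ∧
    (∀ i (hi : i + 1 = n),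
      M.d (i + 1) = eqToHom (emid i hi.le) ≫
        biprod.desc (-(Y.d i) ≫ eqToHom (show Y.obj (i + 1) = Y.obj n by rw [hi]))
          (φ.f (i + 1) ≫ eqToHom (show Y.obj (i + 1) = Y.obj n by rw [hi])) ≫
        eqToHom (show Y.obj n = M.obj (i + 2) by subst hi; exact etop.symm))

/-- An `n`-exangulated structure `(𝔼, 𝔰)` on an additive category `C`:
`Dist X δ` says that `⟨X, δ⟩` is a distinguished `n`-exangle (i.e. `𝔰(δ) = [X]`),
together with all the axioms of Herschend–Liu–Nakaoka: `𝔰` is an exact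
realization ((R0), (R1), (R2), realizing every extension, with values in
homotopy classes of complexes with fixed end terms) satisfying (EA1), (EA2)
and (EA2op). -/
structure NExStruct (n : ℕ) (C : Type u) [Category.{v} C] [Preadditive C] [HasZeroObject C]
    [HasFiniteBiproducts C] [HasBinaryBiproducts C] (E : Cᵒᵖ ⥤ C ⥤ AddCommGrpCat.{v}) : Type (max u v) where
  Dist : DistType n C E
  /-- every extension is realized by some distinguished `n`-exangle -/
  realize : ∀ {A B : C} (δ : EE E B A),
    ∃ (X : ExCpx n C) (h0 : X.obj 0 = A) (h1 : X.obj (n + 1) = B),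
      Dist X (castE h1.symm h0.symm δ)
  /-- distinguished `n`-exangles are `E`-attached complexes -/
  attached_push : ∀ (X : ExCpx n C) (δ : EE E (X.obj (n + 1)) (X.obj 0)),
    Dist X δ → push (X.d 0) δ = 0
  attached_pull : ∀ (X : ExCpx n C) (δ : EE E (X.obj (n + 1)) (X.obj 0)),
    Dist X δ → pull (X.d n) δ = 0
  /-- the realization takes values in homotopy equivalence classes: closure -/
  dist_htpy : ∀ (X Y : ExCpx n C) (h0 : X.obj 0 = Y.obj 0) (h1 : X.obj (n + 1) = Y.obj (n + 1))
    (δ : EE E (X.obj (n + 1)) (X.obj 0)),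
    Dist X δ → FixedEndsHtpyEquiv n X Y h0 h1 → Dist Y (castE h1 h0 δ)
  /-- the realization takes values in homotopy equivalence classes: uniqueness -/
  dist_unique : ∀ (X Y : ExCpx n C) (h0 : X.obj 0 = Y.obj 0) (h1 : X.obj (n + 1) = Y.obj (n + 1))
    (δ : EE E (X.obj (n + 1)) (X.obj 0)),
    Dist X δ → Dist Y (castE h1 h0 δ) → FixedEndsHtpyEquiv n X Y h0 h1
  /-- (R0): morphisms of extensions lift to morphisms of the realizing complexes -/
  liftMor : ∀ (X Y : ExCpx n C) (δ : EE E (X.obj (n + 1)) (X.obj 0))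
    (ρ : EE E (Y.obj (n + 1)) (Y.obj 0)) (a : X.obj 0 ⟶ Y.obj 0)
    (c : X.obj (n + 1) ⟶ Y.obj (n + 1)),
    Dist X δ → Dist Y ρ → push a δ = pull c ρ →
    ∃ φ : CpxHom X Y, φ.f 0 = a ∧ φ.f (n + 1) = c
  /-- (R1), contravariant exactness at the middle terms -/
  exact_contra_mid : ∀ (X : ExCpx n C) (δ : EE E (X.obj (n + 1)) (X.obj 0)), Dist X δ →
    ∀ (W : C) (i : ℕ), i + 1 ≤ n → ∀ g : W ⟶ X.obj (i + 1),
      g ≫ X.d (i + 1) = 0 → ∃ h : W ⟶ X.obj i, h ≫ X.d i = g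
  /-- (R1), contravariant exactness at the last term -/
  exact_contra_top : ∀ (X : ExCpx n C) (δ : EE E (X.obj (n + 1)) (X.obj 0)), Dist X δ →
    ∀ (W : C) (g : W ⟶ X.obj (n + 1)), pull g δ = 0 → ∃ h : W ⟶ X.obj n, h ≫ X.d n = g
  /-- (R1), covariant exactness at the middle terms -/
  exact_cov_mid : ∀ (X : ExCpx n C) (δ : EE E (X.obj (n + 1)) (X.obj 0)), Dist X δ →
    ∀ (W : C) (i : ℕ), i + 1 ≤ n → ∀ g : X.obj (i + 1) ⟶ W,
      X.d i ≫ g = 0 → ∃ h : X.obj (i + 2) ⟶ W, X.d (i + 1) ≫ h = g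
  /-- (R1), covariant exactness at the first term -/
  exact_cov_bot : ∀ (X : ExCpx n C) (δ : EE E (X.obj (n + 1)) (X.obj 0)), Dist X δ →
    ∀ (W : C) (g : X.obj 0 ⟶ W), push g δ = 0 → ∃ h : X.obj 1 ⟶ W, X.d 0 ≫ h = g
  /-- (R2): the zero extension `0 ∈ E(0, A)` is realized by the trivial complex -/
  r2 : ∀ A : C, ∃ X : ExCpx n C, X.obj 0 = A ∧ IsIso (X.d 0) ∧
    (∀ i, 2 ≤ i → IsZero (X.obj i)) ∧ Dist X 0
  /-- (R2), dual: the zero extension `0 ∈ E(A, 0)` is realized by the trivial complex -/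
  r2op : ∀ A : C, ∃ X : ExCpx n C, X.obj (n + 1) = A ∧ IsIso (X.d n) ∧
    (∀ i, i + 1 ≤ n → IsZero (X.obj i)) ∧ Dist X 0
  /-- (EA1): compositions of inflations are inflations -/
  ea1_infl : ∀ {A B D : C} (f : A ⟶ B) (g : B ⟶ D),
    InflationOf Dist f → InflationOf Dist g → InflationOf Dist (f ≫ g)
  /-- (EA1): compositions of deflations are deflations -/
  ea1_defl : ∀ {A B D : C} (f : A ⟶ B) (g : B ⟶ D),
    DeflationOf Dist f → DeflationOf Dist g → DeflationOf Dist (f ≫ g)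
  /-- (EA2): good lifts exist -/
  ea2 : ∀ (X Y : ExCpx n C) (h0 : Y.obj 0 = X.obj 0) (ρ : EE E (Y.obj (n + 1)) (Y.obj 0))
    (c : X.obj (n + 1) ⟶ Y.obj (n + 1)),
    Dist Y ρ → Dist X (castE rfl h0 (pull c ρ)) →
    ∃ φ : CpxHom X Y, φ.f 0 = eqToHom h0.symm ∧ φ.f (n + 1) = c ∧
      ∃ (M : ExCpx n C) (hM0 : M.obj 0 = X.obj 1) (hMtop : M.obj (n + 1) = Y.obj (n + 1)),
        IsMappingCone n φ M ∧
        Dist M (castE hMtop.symm hM0.symm (push (eqToHom h0 ≫ X.d 0) ρ))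
  /-- (EA2op): dually, good lifts exist -/
  ea2op : ∀ (X Y : ExCpx n C) (htop : Y.obj (n + 1) = X.obj (n + 1))
    (ρ : EE E (Y.obj (n + 1)) (Y.obj 0)) (a : Y.obj 0 ⟶ X.obj 0),
    Dist Y ρ → Dist X (castE htop rfl (push a ρ)) →
    ∃ φ : CpxHom Y X, φ.f 0 = a ∧ φ.f (n + 1) = eqToHom htop ∧
      ∃ (M : ExCpx n C) (hM0 : M.obj 0 = Y.obj 0) (hMtop : M.obj (n + 1) = X.obj n),
        IsMappingCocone n φ M ∧
        Dist M (castE hMtop.symm hM0.symm (pull (X.d n ≫ eqToHom htop.symm) ρ))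

/-- The morphism `A → 0` is a trivial inflation: it embeds in a distinguished
`n`-exangle `A → 0 → ⋯ → 0 → Y ⇢ δ`. -/
def TrivialInflation {n : ℕ} {E : Cᵒᵖ ⥤ C ⥤ AddCommGrpCat.{v}} (σ : NExStruct n C E)
    (A : C) : Prop :=
  ∃ (X : ExCpx n C) (δ : EE E (X.obj (n + 1)) (X.obj 0)),
    σ.Dist X δ ∧ X.obj 0 = A ∧ ∀ i, 1 ≤ i → i ≤ n → IsZero (X.obj i)

/-- The morphism `0 → A` is a trivial deflation: it embeds in a distinguished
`n`-exangle `Z → 0 → ⋯ → 0 → A ⇢ δ`. -/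
def TrivialDeflation {n : ℕ} {E : Cᵒᵖ ⥤ C ⥤ AddCommGrpCat.{v}} (σ : NExStruct n C E)
    (A : C) : Prop :=
  ∃ (X : ExCpx n C) (δ : EE E (X.obj (n + 1)) (X.obj 0)),
    σ.Dist X δ ∧ X.obj (n + 1) = A ∧ ∀ i, 1 ≤ i → i ≤ n → IsZero (X.obj i)

/-- An `(n+2)`-`Σ`-sequence `A₀ → A₁ → ⋯ → A_{n+1} → Σ A₀`. -/
structure AngSeq (n : ℕ) (C : Type u) [Category.{v} C] (S : C ⥤ C) where
  obj : ℕ → C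
  d : ∀ i, obj i ⟶ obj (i + 1)
  last : obj (n + 1) ⟶ S.obj (obj 0)

/-- A morphism of `(n+2)`-`Σ`-sequences. -/
structure AngHom {n : ℕ} {S : C ⥤ C} (T T' : AngSeq n C S) where
  f : ∀ i, T.obj i ⟶ T'.obj i
  comm : ∀ i, i ≤ n → T.d i ≫ f (i + 1) = f i ≫ T'.d i
  comm_last : T.last ≫ S.map (f 0) = f (n + 1) ≫ T'.last

/-- `T` and `T'` are isomorphic `(n+2)`-`Σ`-sequences. -/
def IsIsoSeq (n : ℕ) {S : C ⥤ C} (T T' : AngSeq n C S) : Prop :=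
  ∃ φ : AngHom T T', ∀ i, i ≤ n + 1 → IsIso (φ.f i)

/-- `Z` is a direct sum of the `(n+2)`-`Σ`-sequences `X` and `Y`. -/
def IsDirectSumSeq (n : ℕ) {S : C ⥤ C} (Z X Y : AngSeq n C S) : Prop :=
  ∃ (p : AngHom Z X) (q : AngHom Z Y) (ix : AngHom X Z) (iy : AngHom Y Z),
    (∀ i, i ≤ n + 1 → ix.f i ≫ p.f i = 𝟙 _) ∧ (∀ i, i ≤ n + 1 → iy.f i ≫ q.f i = 𝟙 _) ∧
    (∀ i, i ≤ n + 1 → ix.f i ≫ q.f i = 0) ∧ (∀ i, i ≤ n + 1 → iy.f i ≫ p.f i = 0) ∧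
    (∀ i, i ≤ n + 1 → p.f i ≫ ix.f i + q.f i ≫ iy.f i = 𝟙 _)

/-- `R` is the left rotation of the `(n+2)`-`Σ`-sequence `T`. -/
def IsLeftRotation (n : ℕ) {S : C ⥤ C} (T R : AngSeq n C S) : Prop :=
  ∃ (e : ∀ i, i ≤ n → R.obj i = T.obj (i + 1)) (etop : R.obj (n + 1) = S.obj (T.obj 0)),
    (∀ i (hi : i + 1 ≤ n), R.d i = eqToHom (e i (by omega)) ≫ T.d (i + 1) ≫
      eqToHom (e (i + 1) hi).symm) ∧
    (R.d n = eqToHom (e n le_rfl) ≫ T.last ≫ eqToHom etop.symm) ∧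
    (R.last = eqToHom etop ≫ (((-1 : ℤ) ^ n) • S.map (T.d 0)) ≫
      eqToHom (congrArg S.obj (e 0 (Nat.zero_le n))).symm)

/-- `M` is the mapping cone of the morphism `Φ` of `(n+2)`-`Σ`-sequences. -/
def IsMappingConeSeq (n : ℕ) {S : C ⥤ C} {T T' : AngSeq n C S} (Φ : AngHom T T')
    (M : AngSeq n C S) : Prop :=
  ∃ (e : ∀ i, i ≤ n → M.obj i = ((T.obj (i + 1)) ⊞ (T'.obj i)))
    (etop : M.obj (n + 1) = ((S.obj (T.obj 0)) ⊞ (T'.obj (n + 1)))),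
    (∀ i (hi : i + 1 ≤ n), M.d i = eqToHom (e i (by omega)) ≫
        biprod.desc (biprod.lift (-(T.d (i + 1))) (Φ.f (i + 1))) (biprod.lift 0 (T'.d i)) ≫
        eqToHom (e (i + 1) hi).symm) ∧
    (M.d n = eqToHom (e n le_rfl) ≫
        biprod.desc (biprod.lift (-(T.last)) (Φ.f (n + 1))) (biprod.lift 0 (T'.d n)) ≫
        eqToHom etop.symm) ∧
    (M.last = eqToHom etop ≫
        biprod.desc ((-(S.map (T.d 0) ≫ S.map biprod.inl)) + (S.map (Φ.f 0) ≫ S.map biprod.inr))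
          (T'.last ≫ S.map biprod.inr) ≫
        eqToHom (congrArg S.obj (e 0 (Nat.zero_le n))).symm)

/-- An `(n+2)`-angulated structure `(Σ, Θ)` on an additive category `C`
(Geiss–Keller–Oppermann): `Σ = S` is an auto-equivalence, `Θ = Theta` is a class of
`(n+2)`-`Σ`-sequences satisfying the axioms (N1)–(N4). -/
structure NAngStruct (n : ℕ) (C : Type u) [Category.{v} C] [Preadditive C] [HasZeroObject C]
    [HasFiniteBiproducts C] [HasBinaryBiproducts C] (S : C ⥤ C) : Type (max u v) where
  /-- `Σ` is an auto-equivalence -/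
  eqv : S.IsEquivalence
  Theta : AngSeq n C S → Prop
  /-- (N1)(a): closed under isomorphisms -/
  iso_closed : ∀ T T' : AngSeq n C S, Theta T → IsIsoSeq n T T' → Theta T'
  /-- (N1)(a): closed under direct sums -/
  sum_closed : ∀ Z X Y : AngSeq n C S, Theta X → Theta Y → IsDirectSumSeq n Z X Y → Theta Z
  /-- (N1)(a): closed under direct summands -/
  summand_closed : ∀ Z X Y : AngSeq n C S, Theta Z → IsDirectSumSeq n Z X Y → Theta X
  /-- (N1)(b): trivial sequences belong to `Theta` -/
  trivial_mem : ∀ T : AngSeq n C S, IsIso (T.d 0) →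
    (∀ i, 2 ≤ i → i ≤ n + 1 → IsZero (T.obj i)) → Theta T
  /-- (N1)(c): every morphism extends to an `(n+2)`-angle -/
  extend_mor : ∀ {A B : C} (f : A ⟶ B), ∃ T : AngSeq n C S, Theta T ∧
    ∃ (h0 : T.obj 0 = A) (h1 : T.obj 1 = B), T.d 0 = eqToHom h0 ≫ f ≫ eqToHom h1.symm
  /-- (N2): `Theta` is closed under left rotation -/
  rot : ∀ T R : AngSeq n C S, IsLeftRotation n T R → Theta T → Theta R
  /-- (N2): `Theta` is closed under right rotation -/
  rot_inv : ∀ T R : AngSeq n C S, IsLeftRotation n T R → Theta R → Theta T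
  /-- (N3): commutative squares extend to morphisms of `(n+2)`-angles -/
  n3 : ∀ T T' : AngSeq n C S, Theta T → Theta T' →
    ∀ (φ0 : T.obj 0 ⟶ T'.obj 0) (φ1 : T.obj 1 ⟶ T'.obj 1), T.d 0 ≫ φ1 = φ0 ≫ T'.d 0 →
      ∃ Φ : AngHom T T', Φ.f 0 = φ0 ∧ Φ.f 1 = φ1
  /-- (N4): the fillers can be chosen so that the mapping cone belongs to `Theta` -/
  n4 : ∀ T T' : AngSeq n C S, Theta T → Theta T' →
    ∀ (φ0 : T.obj 0 ⟶ T'.obj 0) (φ1 : T.obj 1 ⟶ T'.obj 1), T.d 0 ≫ φ1 = φ0 ≫ T'.d 0 →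
      ∃ Φ : AngHom T T', Φ.f 0 = φ0 ∧ Φ.f 1 = φ1 ∧
        ∃ M : AngSeq n C S, IsMappingConeSeq n Φ M ∧ Theta M

/-- The `(n+2)`-angulated structure `α` on `C` is `E`-compatible with the
`n`-exangulated structure `σ`: every `(n+2)`-angle, viewed as a complex, is a
distinguished `n`-exangle for some extension `δ`. -/
def ECompatible {n : ℕ} {E : Cᵒᵖ ⥤ C ⥤ AddCommGrpCat.{v}} (σ : NExStruct n C E)
    {S : C ⥤ C} (α : NAngStruct n C S) : Prop :=
  ∀ T : AngSeq n C S, α.Theta T →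
    ∃ (X : ExCpx n C) (h : ∀ i, i ≤ n + 1 → X.obj i = T.obj i),
      (∀ i (hi : i ≤ n), X.d i = eqToHom (h i (by omega)) ≫ T.d i ≫
        eqToHom (h (i + 1) (by omega)).symm) ∧
      ∃ δ : EE E (X.obj (n + 1)) (X.obj 0), σ.Dist X δ

/-- The realization `𝔯` of the bifunctor `E¹ = C(-, Σ-)` induced by the chosen
distinguished `n`-exangles `X → 0 → ⋯ → 0 → ΣX ⇢ δ_X`:
`𝔯(ε) := 𝔰(ε^* δ_{X₀})`, i.e. `⟨X, ε⟩` is `𝔯`-distinguished iff `⟨X, ε^* δ_{X₀}⟩`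
is `𝔰`-distinguished. -/
def DistR {n : ℕ} {E : Cᵒᵖ ⥤ C ⥤ AddCommGrpCat.{v}} (σ : NExStruct n C E) (F : C ⥤ C)
    (δ : ∀ X : C, EE E (F.obj X) X) :
    ∀ X : ExCpx n C, (X.obj (n + 1) ⟶ F.obj (X.obj 0)) → Prop :=
  fun X ε => σ.Dist X (pull ε (δ (X.obj 0)))

/-- Inflations with respect to a hom-valued (i.e. `E¹ = C(-, Σ-)`-valued)
distinguished-`n`-exangle predicate. -/
def HInflationOf {n : ℕ} (F : C ⥤ C)
    (R : ∀ X : ExCpx n C, (X.obj (n + 1) ⟶ F.obj (X.obj 0)) → Prop)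
    {A B : C} (f : A ⟶ B) : Prop :=
  ∃ (X : ExCpx n C) (ε : X.obj (n + 1) ⟶ F.obj (X.obj 0)) (h0 : X.obj 0 = A)
    (h1 : X.obj 1 = B), R X ε ∧ X.d 0 = eqToHom h0 ≫ f ≫ eqToHom h1.symm

/-- Deflations with respect to a hom-valued distinguished-`n`-exangle predicate. -/
def HDeflationOf {n : ℕ} (F : C ⥤ C)
    (R : ∀ X : ExCpx n C, (X.obj (n + 1) ⟶ F.obj (X.obj 0)) → Prop)
    {A B : C} (f : A ⟶ B) : Prop :=
  ∃ (X : ExCpx n C) (ε : X.obj (n + 1) ⟶ F.obj (X.obj 0)) (h0 : X.obj n = A)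
    (h1 : X.obj (n + 1) = B), R X ε ∧ X.d n = eqToHom h0 ≫ f ≫ eqToHom h1.symm

section Helpers

variable {C : Type u} [Category.{v} C] [Preadditive C] [HasZeroObject C]
  [HasFiniteBiproducts C] [HasBinaryBiproducts C]
variable {E : Cᵒᵖ ⥤ C ⥤ AddCommGrpCat.{v}}

lemma pull_pull {B B' B'' A : C} (g : B' ⟶ B) (h : B'' ⟶ B') (d : EE E B A) :
    pull h (pull g d) = pull (h ≫ g) d := by
  show ((E.map g.op ≫ E.map h.op).app A) d = ((E.map (h ≫ g).op).app A) d
  rw [← E.map_comp, ← op_comp]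

lemma push_push {B A A' A'' : C} (f : A ⟶ A') (f' : A' ⟶ A'') (d : EE E B A) :
    push f' (push f d) = push (f ≫ f') d := by
  show (((E.obj (op B)).map f ≫ (E.obj (op B)).map f')) d = _
  rw [← (E.obj (op B)).map_comp]
  rfl

lemma pull_push {B B' A A' : C} (g : B' ⟶ B) (f : A ⟶ A') (d : EE E B A) :
    pull g (push f d) = push f (pull g d) := by
  show (((E.obj (op B)).map f ≫ (E.map g.op).app A')) d =
    (((E.map g.op).app A ≫ (E.obj (op B')).map f)) d
  rw [(E.map g.op).naturality f]

lemma pull_id {B A : C} (d : EE E B A) : pull (𝟙 B) d = d := by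
  show ((E.map (𝟙 B).op).app A) d = d
  rw [op_id, E.map_id]
  rfl

lemma push_id {B A : C} (d : EE E B A) : push (𝟙 A) d = d := by
  show ((E.obj (op B)).map (𝟙 A)) d = d
  rw [(E.obj (op B)).map_id]
  rfl

lemma pull_zero [E.Additive] {B B' A : C} (d : EE E B A) :
    pull (0 : B' ⟶ B) d = 0 := by
  show ((E.map (0 : B' ⟶ B).op).app A) d = 0
  rw [op_zero, E.map_zero]
  rfl

lemma pull_neg [E.Additive] {B B' A : C} (g : B' ⟶ B) (d : EE E B A) :
    pull (-g) d = -pull g d := by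
  show ((E.map (-g).op).app A) d = -((E.map g.op).app A) d
  rw [op_neg, E.map_neg]
  rfl

lemma push_zero [∀ X : Cᵒᵖ, (E.obj X).Additive] {B A A' : C} (d : EE E B A) :
    push (0 : A ⟶ A') d = 0 := by
  show ((E.obj (op B)).map (0 : A ⟶ A')) d = 0
  rw [(E.obj (op B)).map_zero]
  rfl

lemma pull_add {B B' A : C} (g : B' ⟶ B) (d d' : EE E B A) :
    pull g (d + d') = pull g d + pull g d' :=
  ((E.map g.op).app A).hom.map_add d d'

lemma pull_zero_ext {B B' A : C} (g : B' ⟶ B) :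
    pull g (0 : EE E B A) = 0 :=
  ((E.map g.op).app A).hom.map_zero

lemma pull_neg_ext {B B' A : C} (g : B' ⟶ B) (d : EE E B A) :
    pull g (-d) = -pull g d :=
  ((E.map g.op).app A).hom.map_neg d

@[simp] lemma castE_rfl {B A : C} (d : EE E B A) : castE rfl rfl d = d := rfl

lemma castE_zero {B B' A A' : C} (hB : B = B') (hA : A = A') :
    castE hB hA (0 : EE E B A) = 0 := by subst hB; subst hA; rfl

lemma castE_eq {B B' A A' : C} (hB : B = B') (hA : A = A') (d : EE E B A) :
    castE hB hA d = push (eqToHom hA) (pull (eqToHom hB.symm) d) := by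
  subst hB; subst hA
  simp [pull_id, push_id]

lemma castE_eq_zero_iff {B B' A A' : C} (hB : B = B') (hA : A = A') (d : EE E B A) :
    castE hB hA d = 0 ↔ d = 0 := by
  subst hB; subst hA; rfl

lemma biprod_desc_comp {X Y Z W : C} (u : X ⟶ Z) (v : Y ⟶ Z) (t : Z ⟶ W) :
    biprod.desc u v ≫ t = biprod.desc (u ≫ t) (v ≫ t) := by
  apply biprod.hom_ext' <;> simp

lemma biprod_desc_zero_left {X Y Z : C} (v : Y ⟶ Z) :
    biprod.desc (0 : X ⟶ Z) v = biprod.snd ≫ v := by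
  apply biprod.hom_ext' <;> simp

end Helpers


section KeyHelpers

variable {C : Type u} [Category.{v} C] [Preadditive C] [HasZeroObject C]
  [HasFiniteBiproducts C] [HasBinaryBiproducts C]
variable {E : Cᵒᵖ ⥤ C ⥤ AddCommGrpCat.{v}}

lemma push_zero_ext {B A A' : C} (f : A ⟶ A') :
    push f (0 : EE E B A) = 0 :=
  ((E.obj (op B)).map f).hom.map_zero

lemma castE_pull_delta {F : C ⥤ C} {δ : ∀ X : C, EE E (F.obj X) X}
    {B₁ B₂ A₁ A₂ : C} (hB : B₁ = B₂) (hA : A₁ = A₂) (u : B₁ ⟶ F.obj A₁) :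
    castE hB hA (pull u (δ A₁)) =
      pull (eqToHom hB.symm ≫ u ≫ eqToHom (congrArg F.obj hA)) (δ A₂) := by
  subst hB; subst hA
  simp [pull_id]

end KeyHelpers

/-- Surjectivity of `ε ↦ ε^* δ_A : C(Q, ΣA) → E(Q, A)`. -/
lemma exists_pull_eq
    {C : Type u} [Category.{v} C] [Preadditive C] [HasZeroObject C]
    [HasFiniteBiproducts C] [HasBinaryBiproducts C]
    (E : Cᵒᵖ ⥤ C ⥤ AddCommGrpCat.{v}) [∀ X : Cᵒᵖ, (E.obj X).Additive] [E.Additive]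
    (n : ℕ) (hn : 0 < n) (σ : NExStruct n C E)
    (F : C ⥤ C) (cpx : C → ExCpx n C)
    (hc0 : ∀ X : C, (cpx X).obj 0 = X) (hctop : ∀ X : C, (cpx X).obj (n + 1) = F.obj X)
    (hmid : ∀ (X : C) (i : ℕ), 1 ≤ i → i ≤ n → IsZero ((cpx X).obj i))
    (δ : ∀ X : C, EE E (F.obj X) X)
    (hdist : ∀ X : C, σ.Dist (cpx X) (castE (hctop X).symm (hc0 X).symm (δ X)))
    (A Q : C) (θ : EE E Q A) : ∃ q : Q ⟶ F.obj A, pull q (δ A) = θ := by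
  have hn1 : 1 ≤ n := hn
  have hbz : IsZero ((cpx A).obj 1) := hmid A 1 le_rfl hn1
  set η : EE E (Q ⊞ F.obj A) A := pull biprod.fst θ + pull biprod.snd (δ A) with hη
  obtain ⟨G, hG0, hG1, hGdist⟩ := σ.realize η
  have h0 : G.obj 0 = (cpx A).obj 0 := hG0.trans (hc0 A).symm
  set c : (cpx A).obj (n + 1) ⟶ G.obj (n + 1) :=
    eqToHom (hctop A) ≫ biprod.inr ≫ eqToHom hG1.symm with hc
  have hcd : σ.Dist (cpx A) (castE rfl h0 (pull c (castE hG1.symm hG0.symm η))) := by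
    have heq : castE rfl h0 (pull c (castE hG1.symm hG0.symm η))
        = castE (hctop A).symm (hc0 A).symm (δ A) := by
      rw [castE_eq hG1.symm hG0.symm, castE_eq (hctop A).symm (hc0 A).symm,
        castE_eq rfl h0, pull_push, pull_pull]
      rw [hη, pull_add, pull_pull, pull_pull]
      simp only [hc, Category.assoc, eqToHom_trans, eqToHom_refl, Category.comp_id,
        biprod.inr_fst, biprod.inr_snd, comp_zero, pull_zero, pull_id, zero_add,
        push_push, Category.id_comp]
    rw [heq]
    exact hdist A
  obtain ⟨φ, hφ0, hφtop, M, hM0, hMtop, hcone, hMdist⟩ :=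
    σ.ea2 (cpx A) G h0 (castE hG1.symm hG0.symm η) c hGdist hcd
  have hw0 : eqToHom h0 ≫ (cpx A).d 0 = 0 := hbz.eq_of_tgt _ _
  have hMz : σ.Dist M 0 := by
    rw [hw0, push_zero, castE_zero] at hMdist
    exact hMdist
  obtain ⟨h, hh⟩ := σ.exact_contra_top M 0 hMz (M.obj (n + 1)) (𝟙 _) (pull_zero_ext _)
  obtain ⟨e0, etop, emid, hd0c, hdmc, hdnc⟩ := hcone
  have hdn := hdnc hn1
  -- the attached equation for G
  have hatt : pull (G.d n) (castE hG1.symm hG0.symm η) = 0 := σ.attached_pull G _ hGdist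
  have hatt2 : pull (G.d n ≫ eqToHom hG1) η = 0 := by
    rw [castE_eq hG1.symm hG0.symm, pull_push, pull_pull] at hatt
    have := congrArg (push (eqToHom hG0)) hatt
    rw [push_push, eqToHom_trans, eqToHom_refl, push_id, push_zero_ext] at this
    exact this
  have hsp : pull (G.d n ≫ eqToHom hG1 ≫ biprod.fst) θ
      + pull (G.d n ≫ eqToHom hG1 ≫ biprod.snd) (δ A) = 0 := by
    rw [hη, pull_add, pull_pull, pull_pull] at hatt2
    simpa only [Category.assoc] using hatt2
  -- the section of the first component
  have hh2 : h ≫ eqToHom (emid n hn1 le_rfl) ≫ biprod.desc (φ.f (n + 1)) (G.d n)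
      = eqToHom etop := by
    rw [hdn] at hh
    have := congrArg (fun t => t ≫ eqToHom etop) hh
    simpa only [Category.assoc, eqToHom_trans, eqToHom_refl, Category.comp_id,
      Category.id_comp] using this
  set s0 : Q ⟶ G.obj n :=
    biprod.inl ≫ eqToHom hG1.symm ≫ eqToHom etop.symm ≫ h ≫
      eqToHom (emid n hn1 le_rfl) ≫ biprod.snd with hs0
  have h3 : biprod.snd ≫ G.d n ≫ eqToHom hG1 ≫ biprod.fst
      = biprod.desc (φ.f (n + 1)) (G.d n) ≫ eqToHom hG1 ≫ biprod.fst := by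
    apply biprod.hom_ext'
    · rw [hφtop]
      simp [hc, eqToHom_trans]
    · simp
  have hsec : s0 ≫ G.d n ≫ eqToHom hG1 ≫ biprod.fst = 𝟙 Q := by
    rw [hs0]
    simp only [Category.assoc]
    rw [h3]
    rw [reassoc_of% hh2]
    simp [eqToHom_trans]
  refine ⟨-(s0 ≫ G.d n ≫ eqToHom hG1 ≫ biprod.snd), ?_⟩
  have h1 : pull (G.d n ≫ eqToHom hG1 ≫ biprod.fst) θ
      = -pull (G.d n ≫ eqToHom hG1 ≫ biprod.snd) (δ A) :=
    eq_neg_of_add_eq_zero_left hsp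
  calc pull (-(s0 ≫ G.d n ≫ eqToHom hG1 ≫ biprod.snd)) (δ A)
      = -pull (s0 ≫ G.d n ≫ eqToHom hG1 ≫ biprod.snd) (δ A) := pull_neg _ _
    _ = -pull s0 (pull (G.d n ≫ eqToHom hG1 ≫ biprod.snd) (δ A)) := by rw [pull_pull]
    _ = pull s0 (-pull (G.d n ≫ eqToHom hG1 ≫ biprod.snd) (δ A)) := (pull_neg_ext _ _).symm
    _ = pull s0 (pull (G.d n ≫ eqToHom hG1 ≫ biprod.fst) θ) := by rw [← h1]
    _ = pull (s0 ≫ G.d n ≫ eqToHom hG1 ≫ biprod.fst) θ := pull_pull _ _ _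
    _ = pull (𝟙 Q) θ := by rw [hsec]
    _ = θ := pull_id _


theorem statement_16 {C : Type u} [Category.{v} C] [Preadditive C] [HasZeroObject C]
    [HasFiniteBiproducts C] [HasBinaryBiproducts C]
    (E : Cᵒᵖ ⥤ C ⥤ AddCommGrpCat.{v}) [∀ X : Cᵒᵖ, (E.obj X).Additive] [E.Additive]
    (n : ℕ) (hn : 0 < n) (σ : NExStruct n C E)
    (htriv : ∀ X : C, TrivialInflation σ X ∧ TrivialDeflation σ X)
    (F : C ⥤ C) (cpx : C → ExCpx n C)
    (hc0 : ∀ X : C, (cpx X).obj 0 = X) (hctop : ∀ X : C, (cpx X).obj (n + 1) = F.obj X)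
    (hmid : ∀ (X : C) (i : ℕ), 1 ≤ i → i ≤ n → IsZero ((cpx X).obj i))
    (δ : ∀ X : C, EE E (F.obj X) X)
    (hdist : ∀ X : C, σ.Dist (cpx X) (castE (hctop X).symm (hc0 X).symm (δ X)))
    (hF : ∀ {X Y : C} (f : X ⟶ Y), push f (δ X) = pull (F.map f) (δ Y)) :
    ((∀ {A B D : C} (f : A ⟶ B) (g : B ⟶ D),
      HInflationOf F (DistR σ F δ) f → HInflationOf F (DistR σ F δ) g →
      HInflationOf F (DistR σ F δ) (f ≫ g)) ∧
    (∀ {A B D : C} (f : A ⟶ B) (g : B ⟶ D),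
      HDeflationOf F (DistR σ F δ) f → HDeflationOf F (DistR σ F δ) g →
      HDeflationOf F (DistR σ F δ) (f ≫ g))) ∧
    ((∀ (X Y : ExCpx n C) (h0 : Y.obj 0 = X.obj 0)
      (ρ : Y.obj (n + 1) ⟶ F.obj (Y.obj 0)) (c : X.obj (n + 1) ⟶ Y.obj (n + 1)),
      DistR σ F δ Y ρ → DistR σ F δ X (c ≫ ρ ≫ eqToHom (congrArg F.obj h0)) →
      ∃ φ : CpxHom X Y, φ.f 0 = eqToHom h0.symm ∧ φ.f (n + 1) = c ∧
        ∃ (M : ExCpx n C) (hM0 : M.obj 0 = X.obj 1) (hMtop : M.obj (n + 1) = Y.obj (n + 1)),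
          IsMappingCone n φ M ∧
          DistR σ F δ M (eqToHom hMtop ≫ ρ ≫ F.map (eqToHom h0 ≫ X.d 0) ≫
            eqToHom (congrArg F.obj hM0).symm)) ∧
    (∀ (X Y : ExCpx n C) (htop : Y.obj (n + 1) = X.obj (n + 1))
      (ρ : Y.obj (n + 1) ⟶ F.obj (Y.obj 0)) (a : Y.obj 0 ⟶ X.obj 0),
      DistR σ F δ Y ρ → DistR σ F δ X (eqToHom htop.symm ≫ ρ ≫ F.map a) →
      ∃ φ : CpxHom Y X, φ.f 0 = a ∧ φ.f (n + 1) = eqToHom htop ∧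
        ∃ (M : ExCpx n C) (hM0 : M.obj 0 = Y.obj 0) (hMtop : M.obj (n + 1) = X.obj n),
          IsMappingCocone n φ M ∧
          DistR σ F δ M (eqToHom hMtop ≫ X.d n ≫ eqToHom htop.symm ≫ ρ ≫
            eqToHom (congrArg F.obj hM0).symm))) := by
  refine ⟨⟨?_, ?_⟩, ?_, ?_⟩
  · -- (EA1) for inflations
    intro A B D f g hf hg
    obtain ⟨X, ε, hX0, hX1, hXR, hXd⟩ := hf
    obtain ⟨Y, ε', hY0, hY1, hYR, hYd⟩ := hg
    obtain ⟨Z, dZ, hZ0, hZ1, hZdist, hZd⟩ :=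
      σ.ea1_infl f g ⟨X, pull ε (δ (X.obj 0)), hX0, hX1, hXR, hXd⟩
        ⟨Y, pull ε' (δ (Y.obj 0)), hY0, hY1, hYR, hYd⟩
    obtain ⟨q, hq⟩ := exists_pull_eq E n hn σ F cpx hc0 hctop hmid δ hdist
      (Z.obj 0) (Z.obj (n + 1)) dZ
    refine ⟨Z, q, hZ0, hZ1, ?_, hZd⟩
    show σ.Dist Z (pull q (δ (Z.obj 0)))
    rw [hq]; exact hZdist
  · -- (EA1) for deflations
    intro A B D f g hf hg
    obtain ⟨X, ε, hX0, hX1, hXR, hXd⟩ := hf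
    obtain ⟨Y, ε', hY0, hY1, hYR, hYd⟩ := hg
    obtain ⟨Z, dZ, hZ0, hZ1, hZdist, hZd⟩ :=
      σ.ea1_defl f g ⟨X, pull ε (δ (X.obj 0)), hX0, hX1, hXR, hXd⟩
        ⟨Y, pull ε' (δ (Y.obj 0)), hY0, hY1, hYR, hYd⟩
    obtain ⟨q, hq⟩ := exists_pull_eq E n hn σ F cpx hc0 hctop hmid δ hdist
      (Z.obj 0) (Z.obj (n + 1)) dZ
    refine ⟨Z, q, hZ0, hZ1, ?_, hZd⟩
    show σ.Dist Z (pull q (δ (Z.obj 0)))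
    rw [hq]; exact hZdist
  · -- (EA2)
    intro X Y h0 ρ c hYd hXd
    have hX' : σ.Dist X (castE rfl h0 (pull c (pull ρ (δ (Y.obj 0))))) := by
      have heq : castE rfl h0 (pull c (pull ρ (δ (Y.obj 0))))
          = pull (c ≫ ρ ≫ eqToHom (congrArg F.obj h0)) (δ (X.obj 0)) := by
        rw [pull_pull, castE_pull_delta rfl h0]
        simp [Category.assoc]
      rw [heq]; exact hXd
    obtain ⟨φ, hφ0, hφtop, M, hM0, hMtop, hcone, hMdist⟩ :=
      σ.ea2 X Y h0 (pull ρ (δ (Y.obj 0))) c hYd hX'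
    refine ⟨φ, hφ0, hφtop, M, hM0, hMtop, hcone, ?_⟩
    show σ.Dist M (pull (eqToHom hMtop ≫ ρ ≫ F.map (eqToHom h0 ≫ X.d 0) ≫
      eqToHom (congrArg F.obj hM0).symm) (δ (M.obj 0)))
    have heq : castE hMtop.symm hM0.symm
        (push (eqToHom h0 ≫ X.d 0) (pull ρ (δ (Y.obj 0))))
        = pull (eqToHom hMtop ≫ ρ ≫ F.map (eqToHom h0 ≫ X.d 0) ≫
            eqToHom (congrArg F.obj hM0).symm) (δ (M.obj 0)) := by
      rw [← pull_push, hF (eqToHom h0 ≫ X.d 0), pull_pull, castE_pull_delta]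
      simp [Category.assoc]
    rw [heq] at hMdist
    exact hMdist
  · -- (EA2op)
    intro X Y htop ρ a hYd hXd
    have hX' : σ.Dist X (castE htop rfl (push a (pull ρ (δ (Y.obj 0))))) := by
      have heq : castE htop rfl (push a (pull ρ (δ (Y.obj 0))))
          = pull (eqToHom htop.symm ≫ ρ ≫ F.map a) (δ (X.obj 0)) := by
        rw [← pull_push, hF a, pull_pull, castE_pull_delta htop rfl]
        simp [Category.assoc]
      rw [heq]; exact hXd
    obtain ⟨φ, hφ0, hφtop, M, hM0, hMtop, hcoc, hMdist⟩ :=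
      σ.ea2op X Y htop (pull ρ (δ (Y.obj 0))) a hYd hX'
    refine ⟨φ, hφ0, hφtop, M, hM0, hMtop, hcoc, ?_⟩
    show σ.Dist M (pull (eqToHom hMtop ≫ X.d n ≫ eqToHom htop.symm ≫ ρ ≫
      eqToHom (congrArg F.obj hM0).symm) (δ (M.obj 0)))
    have heq : castE hMtop.symm hM0.symm
        (pull (X.d n ≫ eqToHom htop.symm) (pull ρ (δ (Y.obj 0))))
        = pull (eqToHom hMtop ≫ X.d n ≫ eqToHom htop.symm ≫ ρ ≫
            eqToHom (congrArg F.obj hM0).symm) (δ (M.obj 0)) := by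
      rw [pull_pull, castE_pull_delta]
      simp [Category.assoc]
    rw [heq] at hMdist
    exact hMdist

end Paper
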